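/- Let M be a binary matroid and T ⊆ E(M). Then T ∪ {a} contains a cocircuit of the element splitting matroid M'_T, where a is the new element; in fact if T contains no cocircuit of M restricted appropriately, T ∪ {a} itself is a cocircuit of M'_T. -/

import Mathlib

open Set

variable {α : Type*}

/-- The rank of a set `X` in a matroid `M`: the maximum size of an independent subset of `X`. -/
noncomputable def mrank (M : Matroid α) (X : Set α) : ℕ :=
  sSup {n | ∃ I, M.Indep I ∧ I ⊆ X ∧ I.ncard = n}

/-- `(A, B)` is a `k`-separation of `M`: a partition of the ground set with both sides of
size at least `k` and `r(A) + r(B) - r(M) ≤ k - 1` (written additively). -/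
def IsKSeparation (M : Matroid α) (k : ℕ) (A B : Set α) : Prop :=
  A ∪ B = M.E ∧ Disjoint A B ∧ k ≤ A.ncard ∧ k ≤ B.ncard ∧
    mrank M A + mrank M B + 1 ≤ mrank M M.E + k

/-- `M` is `n`-connected if it has no `k`-separation for any `k < n`. -/
def NConnected (M : Matroid α) (n : ℕ) : Prop :=
  ∀ k A B, 1 ≤ k → k < n → ¬ IsKSeparation M k A B

/-- A circuit is a minimal dependent set. -/
def MCircuit (M : Matroid α) (C : Set α) : Prop := Minimal M.Dep C

/-- A cocircuit is a circuit of the dual matroid. -/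
def MCocircuit (M : Matroid α) (C : Set α) : Prop := MCircuit M✶ C

/-- A loop is a dependent singleton. -/
def MLoop (M : Matroid α) (e : α) : Prop := M.Dep {e}

/-- A coloop is a loop of the dual, i.e. an element lying in every base. -/
def MColoop (M : Matroid α) (e : α) : Prop := M✶.Dep {e}

/-- `M` is the vector matroid of the family of vectors `φ` over `GF(2)`:
a set is independent iff it lies in the ground set and the corresponding
vectors are linearly independent. -/
def IsRep {W : Type*} [AddCommGroup W] [Module (ZMod 2) W] (M : Matroid α) (φ : α → W) : Prop :=
  ∀ I : Set α, M.Indep I ↔ I ⊆ M.E ∧ LinearIndependent (ZMod 2) (I.restrict φ)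

open scoped Classical in
/-- The columns of the element splitting matrix `A'_T`: each original column gets an extra
coordinate (the new row), equal to `1` exactly on the columns labelled by `T`, and a new
column `a` which is `1` in the new row and `0` elsewhere. -/
noncomputable def splitRep {W : Type*} [AddCommGroup W] [Module (ZMod 2) W]
    (φ : α → W) (T : Set α) (a : α) : α → W × ZMod 2 :=
  fun x => if x = a then (0, 1) else (φ x, if x ∈ T then 1 else 0)

/-- `N` is the element splitting matroid `M'_T` of the binary matroid `M` (represented by `φ`)
with respect to `T`, with new element `a`. -/
def IsEleSplit {W : Type*} [AddCommGroup W] [Module (ZMod 2) W]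
    (M : Matroid α) (φ : α → W) (T : Set α) (a : α) (N : Matroid α) : Prop :=
  a ∉ M.E ∧ N.E = insert a M.E ∧ IsRep N (splitRep φ T a)

/-- `M` is the contraction `N / a` of the single element `a` from `N`. -/
def ContractElemEq (N : Matroid α) (a : α) (M : Matroid α) : Prop :=
  M.E = N.E \ {a} ∧ ∀ I : Set α,
    M.Indep I ↔ a ∉ I ∧
      ((N.Indep {a} ∧ N.Indep (insert a I)) ∨ (¬ N.Indep {a} ∧ N.Indep I))

section Aux

variable {W : Type*} [AddCommGroup W] [Module (ZMod 2) W]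

/-- Adding an element to an independent set stays independent iff its vector is outside the
span of the vectors of the set. -/
lemma aux_indep_insert_iff {M : Matroid α} {φ : α → W} (hM : IsRep M φ) {I : Set α} {x : α}
    (hI : M.Indep I) (hxE : x ∈ M.E) (hxI : x ∉ I) :
    M.Indep (insert x I) ↔ φ x ∉ Submodule.span (ZMod 2) (φ '' I) := by
  have h' : (LinearIndependent (ZMod 2) ((insert x I).restrict φ)) ↔
      (LinearIndependent (ZMod 2) (I.restrict φ)) ∧ φ x ∉ Submodule.span (ZMod 2) (φ '' I) :=
    linearIndepOn_insert (f := φ) hxI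
  have hIli := ((hM I).1 hI).2
  rw [hM]
  constructor
  · rintro ⟨-, hli⟩; exact (h'.1 hli).2
  · intro h; exact ⟨insert_subset hxE hI.subset_ground, h'.2 ⟨hIli, h⟩⟩

/-- A subset of the ground set is spanning iff every vector of the ground set lies in the
span of its vectors. -/
lemma aux_spanning_iff_span {M : Matroid α} {φ : α → W} (hM : IsRep M φ) {S : Set α}
    (hS : S ⊆ M.E) :
    M.Spanning S ↔ ∀ e ∈ M.E, φ e ∈ Submodule.span (ZMod 2) (φ '' S) := by
  obtain ⟨I, hI⟩ := M.exists_isBasis S hS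
  have hIi : M.Indep I := hI.indep
  have span_eq : Submodule.span (ZMod 2) (φ '' S) = Submodule.span (ZMod 2) (φ '' I) := by
    refine le_antisymm ?_ (Submodule.span_mono (image_mono (f := φ) hI.subset))
    rw [Submodule.span_le]
    rintro _ ⟨s, hs, rfl⟩
    by_cases hsI : s ∈ I
    · exact Submodule.subset_span (mem_image_of_mem _ hsI)
    · have hdep := hI.insert_dep ⟨hs, hsI⟩
      by_contra hns
      exact hdep.not_indep ((aux_indep_insert_iff hM hIi (hS hs) hsI).2 hns)
  constructor
  · intro hSp e he
    have hIb : M.IsBase I := hIi.isBase_of_spanning (by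
      rw [Matroid.spanning_iff_closure_eq hIi.subset_ground, hI.closure_eq_closure,
        ← Matroid.spanning_iff_closure_eq hS]
      exact hSp)
    rw [span_eq]
    by_cases heI : e ∈ I
    · exact Submodule.subset_span (mem_image_of_mem _ heI)
    · have hdep := hIb.insert_dep ⟨he, heI⟩
      by_contra hns
      exact hdep.not_indep ((aux_indep_insert_iff hM hIi he heI).2 hns)
  · intro h
    have hIb : M.IsBase I := by
      rw [Matroid.isBase_iff_maximal_indep]
      refine ⟨hIi, fun J hJ hIJ x hxJ => ?_⟩
      by_contra hxI
      have hx : M.Indep (insert x I) := hJ.subset (insert_subset hxJ hIJ)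
      rw [aux_indep_insert_iff hM hIi (hJ.subset_ground hxJ) hxI] at hx
      exact hx (span_eq ▸ h x (hJ.subset_ground hxJ))
    exact hIb.spanning.superset hI.subset hS

/-- Every codependent set contains a minimal codependent set (a cocircuit). -/
lemma aux_exists_minimal_dual_dep (N : Matroid α) {D : Set α} (hD : N✶.Dep D) :
    ∃ C ⊆ D, Minimal N✶.Dep C := by
  have hDE : D ⊆ N.E := hD.subset_ground
  obtain ⟨I, hI⟩ := N.exists_isBasis (N.E \ D) diff_subset
  obtain ⟨B, hB, hIB⟩ := hI.indep.exists_isBase_superset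
  have hnsp : ¬ N.Spanning (N.E \ D) := by
    intro h
    exact hD.not_indep ((Matroid.coindep_iff_compl_spanning hDE).2 h)
  have hBI : ¬ (B ⊆ I) := by
    intro h
    exact hnsp (hB.spanning.superset (h.trans hI.subset) diff_subset)
  obtain ⟨e, heB, heI⟩ := not_subset.1 hBI
  have heB' : e ∉ N.closure (B \ {e}) := hB.indep.notMem_closure_diff_of_mem heB
  set C := N.E \ N.closure (B \ {e}) with hCdef
  have heC : e ∈ C := ⟨hB.subset_ground heB, heB'⟩
  have hcompl : N.E \ D ⊆ N.closure (B \ {e}) :=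
    hI.subset_closure.trans (N.closure_subset_closure (subset_diff_singleton hIB heI))
  have hCD : C ⊆ D := fun x hx => by_contra fun h => hx.2 (hcompl ⟨hx.1, h⟩)
  have hEC : N.E \ C = N.closure (B \ {e}) :=
    diff_diff_cancel_left (N.closure_subset_ground _)
  have hCdep : N✶.Dep C := by
    rw [Matroid.dep_iff]
    refine ⟨fun hind => ?_, diff_subset.trans (by simp [Matroid.dual_ground])⟩
    have hsp := (Matroid.coindep_iff_compl_spanning (I := C) diff_subset).1 hind
    rw [hEC, Matroid.spanning_iff_closure_eq (N.closure_subset_ground _),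
      Matroid.closure_closure] at hsp
    exact heB' (hsp ▸ heC.1)
  refine ⟨C, hCD, hCdep, fun C' hC' hC'C => ?_⟩
  intro x hxC
  by_contra hxC'
  apply hC'.not_indep
  have hC'E : C' ⊆ N.E := hC'.subset_ground
  rw [show (N✶.Indep C' : Prop) = N.Coindep C' from rfl,
    Matroid.coindep_iff_compl_spanning hC'E]
  have hxcl : x ∈ N.closure (insert e (B \ {e})) \ N.closure (B \ {e}) := by
    rw [insert_diff_singleton, insert_eq_of_mem heB, hB.closure_eq]
    exact ⟨hxC.1, hxC.2⟩
  have hex : e ∈ N.closure (insert x (B \ {e})) := (Matroid.closure_exchange hxcl).1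
  have hsub : insert x (B \ {e}) ⊆ N.E \ C' := by
    rintro y (rfl | hy)
    · exact ⟨hxC.1, hxC'⟩
    · refine ⟨hB.subset_ground hy.1, fun hyC' => ?_⟩
      exact (hC'C hyC').2 (N.subset_closure _ (diff_subset.trans hB.subset_ground) hy)
  have hBcl : B ⊆ N.closure (insert x (B \ {e})) := by
    intro y hy
    by_cases hye : y = e
    · exact hye ▸ hex
    · exact N.subset_closure _ (insert_subset (hxC.1) (diff_subset.trans hB.subset_ground))
        (Or.inr ⟨hy, hye⟩)
  rw [Matroid.spanning_iff_closure_eq diff_subset]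
  refine subset_antisymm (N.closure_subset_ground _) ?_
  have h1 : N.closure (insert x (B \ {e})) ⊆ N.closure (N.E \ C') :=
    N.closure_subset_closure hsub
  calc N.E = N.closure B := hB.closure_eq.symm
    _ ⊆ N.closure (N.closure (insert x (B \ {e}))) := N.closure_subset_closure hBcl
    _ = N.closure (insert x (B \ {e})) := N.closure_closure _
    _ ⊆ N.closure (N.E \ C') := h1

end Aux

/-- T ∪ {a} contains a cocircuit of the element splitting matroid M'_T; moreover if T
contains no cocircuit of M, then T ∪ {a} itself is a cocircuit of M'_T. -/
theorem eleSplit_cocircuit_in_insert {α W : Type*} [AddCommGroup W] [Module (ZMod 2) W]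
    (M N : Matroid α) (φ : α → W) (hM : IsRep M φ) (T : Set α) (hT : T ⊆ M.E)
    (hTne : T.Nonempty) (a : α) (hN : IsEleSplit M φ T a N) :
    (∃ Q ⊆ insert a T, MCocircuit N Q) ∧
      ((¬ ∃ Q ⊆ T, MCocircuit M Q) → MCocircuit N (insert a T)) := by
  obtain ⟨ha, hNE, hrep⟩ := hN
  set σ := splitRep φ T a with hσdef
  have haT : a ∉ T := fun h => ha (hT h)
  have haN : a ∈ N.E := hNE ▸ mem_insert a M.E
  have hTN : T ⊆ N.E := fun x hx => hNE ▸ Or.inr (hT hx)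
  have hDN : insert a T ⊆ N.E := insert_subset haN hTN
  have hMTN : M.E \ T ⊆ N.E := fun x hx => hNE ▸ Or.inr hx.1
  have hσa : σ a = ((0 : W), (1 : ZMod 2)) := by simp [hσdef, splitRep]
  have hσT : ∀ x ∈ T, σ x = (φ x, 1) := by
    intro x hx
    have hxa : x ≠ a := fun h => ha (h ▸ hT hx)
    simp [hσdef, splitRep, hxa, hx]
  have hσn : ∀ x, x ≠ a → x ∉ T → σ x = (φ x, 0) := by
    intro x hxa hx
    simp [hσdef, splitRep, hxa, hx]
  have hcomp : N.E \ insert a T = M.E \ T := by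
    rw [hNE]
    ext y
    by_cases hya : y = a <;> simp [hya, ha]
  -- `insert a T` is dependent in the dual of `N`.
  have hDep : N✶.Dep (insert a T) := by
    rw [Matroid.dep_iff]
    refine ⟨fun hind => ?_, by simpa using hDN⟩
    have hsp := (Matroid.coindep_iff_compl_spanning hDN).1 hind
    rw [hcomp, aux_spanning_iff_span hrep hMTN] at hsp
    have hmem := hsp a haN
    rw [hσa] at hmem
    have hker : Submodule.span (ZMod 2) (σ '' (M.E \ T)) ≤
        LinearMap.ker (LinearMap.snd (ZMod 2) W (ZMod 2)) := by
      rw [Submodule.span_le]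
      rintro _ ⟨y, hy, rfl⟩
      have hya : y ≠ a := fun h => ha (h ▸ hy.1)
      simp [LinearMap.mem_ker, hσn y hya hy.2]
    have := hker hmem
    simp [LinearMap.mem_ker] at this
  constructor
  · obtain ⟨C, hCsub, hCmin⟩ := aux_exists_minimal_dual_dep N hDep
    exact ⟨C, hCsub, hCmin⟩
  · intro hnc
    -- `T` is coindependent in `M` since it contains no cocircuit.
    have hco : M.Coindep T := by
      by_contra h
      have hTd : M✶.Dep T := Matroid.dep_iff.2 ⟨h, by simpa using hT⟩
      obtain ⟨C, hCT, hCmin⟩ := aux_exists_minimal_dual_dep M hTd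
      exact hnc ⟨C, hCT, hCmin⟩
    have hSpn : ∀ e ∈ M.E, φ e ∈ Submodule.span (ZMod 2) (φ '' (M.E \ T)) := by
      have := (Matroid.coindep_iff_compl_spanning hT).1 hco
      rwa [aux_spanning_iff_span hM diff_subset] at this
    have hU : ∀ X : Set α, M.E \ T ⊆ X →
        ∀ w ∈ Submodule.span (ZMod 2) (φ '' (M.E \ T)),
          ((w, 0) : W × ZMod 2) ∈ Submodule.span (ZMod 2) (σ '' X) := by
      intro X hX w hw
      have hmap : Submodule.map (LinearMap.inl (ZMod 2) W (ZMod 2))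
          (Submodule.span (ZMod 2) (φ '' (M.E \ T))) ≤
          Submodule.span (ZMod 2) (σ '' X) := by
        rw [Submodule.map_span, Submodule.span_le]
        rintro _ ⟨_, ⟨y, hy, rfl⟩, rfl⟩
        have heq : (LinearMap.inl (ZMod 2) W (ZMod 2)) (φ y) = σ y := by
          have hya : y ≠ a := fun h => ha (h ▸ hy.1)
          rw [hσn y hya hy.2]; rfl
        rw [heq]
        exact Submodule.subset_span (mem_image_of_mem _ (hX hy))
      exact hmap (Submodule.mem_map.2 ⟨w, hw, rfl⟩)
    have hkey : ∀ X : Set α, M.E \ T ⊆ X →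
        ((0 : W), (1 : ZMod 2)) ∈ Submodule.span (ZMod 2) (σ '' X) →
        ∀ e ∈ N.E, σ e ∈ Submodule.span (ZMod 2) (σ '' X) := by
      intro X hX h01 e he
      rw [hNE] at he
      rcases he with rfl | heM
      · rw [hσa]; exact h01
      · have h0 := hU X hX (φ e) (hSpn e heM)
        have hea : e ≠ a := fun h => ha (h ▸ heM)
        by_cases heT : e ∈ T
        · rw [hσT e heT]
          have heq : ((φ e, 1) : W × ZMod 2) = (φ e, 0) + (0, 1) := by simp
          rw [heq]
          exact add_mem h0 h01
        · rw [hσn e hea heT]; exact h0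
    -- every proper subset obtained by removing a point is coindependent
    have hdel : ∀ x ∈ insert a T, N✶.Indep (insert a T \ {x}) := by
      intro x hx
      have hsubE : insert a T \ {x} ⊆ N.E := diff_subset.trans hDN
      rw [show (N✶.Indep (insert a T \ {x}) : Prop) = N.Coindep (insert a T \ {x}) from rfl,
        Matroid.coindep_iff_compl_spanning hsubE]
      rcases hx with rfl | hxT
      · have hset : N.E \ (insert x T \ {x}) = insert x (M.E \ T) := by
          rw [hNE]
          ext y
          by_cases hya : y = x <;> simp [hya, ha]
        have hXN : insert x (M.E \ T) ⊆ N.E := insert_subset haN hMTN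
        rw [hset, aux_spanning_iff_span hrep hXN]
        refine hkey _ (subset_insert _ _) ?_
        rw [← hσa]
        exact Submodule.subset_span (mem_image_of_mem _ (mem_insert _ _))
      · have hxa : x ≠ a := fun h => haT (h ▸ hxT)
        have hxE : x ∈ M.E := hT hxT
        have hset : N.E \ (insert a T \ {x}) = insert x (M.E \ T) := by
          rw [hNE]
          ext y
          by_cases hya : y = a
          · simp [hya, ha, Ne.symm hxa]
          · by_cases hyx : y = x <;> simp [hya, hyx, hxE, hxT]
        have hXN : insert x (M.E \ T) ⊆ N.E := insert_subset (hTN hxT) hMTN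
        rw [hset, aux_spanning_iff_span hrep hXN]
        refine hkey _ (subset_insert _ _) ?_
        have hx0 := hU _ (subset_insert x (M.E \ T)) (φ x) (hSpn x hxE)
        have hx1 : σ x ∈ Submodule.span (ZMod 2) (σ '' insert x (M.E \ T)) :=
          Submodule.subset_span (mem_image_of_mem _ (mem_insert _ _))
        rw [hσT x hxT] at hx1
        have heq : ((0 : W), (1 : ZMod 2)) = ((φ x, 1) : W × ZMod 2) - (φ x, 0) := by simp
        rw [heq]
        exact sub_mem hx1 hx0
    refine ⟨hDep, fun C' hC' hsub => ?_⟩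
    intro x hx
    by_contra hxC'
    have hss : C' ⊆ insert a T \ {x} := fun y hy => ⟨hsub hy, fun h => hxC' (h ▸ hy)⟩
    exact hC'.not_indep ((hdel x hx).subset hss)
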